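/- Let R > 0 and let f : [0, R) → ℝ be twice continuously differentiable with f(0) = 0, f'(0) = −1, and f' convex and strictly increasing. Set ν := sup{t ∈ [0, R) : f'(t) < 0}, and for t ∈ [0, ν) define the Newton iteration map n_f(t) := t − f(t)/f'(t). Then the function (0, ν) ∋ t ↦ |n_f(t)|/t² is strictly increasing, and |n_f(t)|/t² ≤ f''(t)/(2|f'(t)|) for all t ∈ (0, ν). -/

import Mathlib

open RealInnerProductSpace Filter Metric Set

theorem newton_map_ratio_strict_mono (R : ℝ) (hR : 0 < R)
    (f f' f'' : ℝ → ℝ)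
    (hfd1 : ∀ t ∈ Set.Ico (0 : ℝ) R, HasDerivWithinAt f (f' t) (Set.Ico (0 : ℝ) R) t)
    (hfd2 : ∀ t ∈ Set.Ico (0 : ℝ) R, HasDerivWithinAt f' (f'' t) (Set.Ico (0 : ℝ) R) t)
    (hfc : ContinuousOn f'' (Set.Ico (0 : ℝ) R))
    (hf0 : f 0 = 0) (hf'0 : f' 0 = -1)
    (hfconv : ConvexOn ℝ (Set.Ico (0 : ℝ) R) f')
    (hfmono : StrictMonoOn f' (Set.Ico (0 : ℝ) R))
    (ν : ℝ) (hν : ν = sSup {u : ℝ | u ∈ Set.Ico (0 : ℝ) R ∧ f' u < 0})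
    :
    StrictMonoOn (fun t : ℝ => |t - f t / f' t| / t ^ 2) (Set.Ioo 0 ν) ∧
      ∀ t ∈ Set.Ioo (0 : ℝ) ν, |t - f t / f' t| / t ^ 2 ≤ f'' t / (2 * |f' t|) := by
  have hSne : ({u : ℝ | u ∈ Set.Ico (0 : ℝ) R ∧ f' u < 0}).Nonempty :=
    ⟨0, ⟨⟨le_refl 0, hR⟩, by rw [hf'0]; norm_num⟩⟩
  have hνR : ν ≤ R := by
    rw [hν]; exact csSup_le hSne fun u hu => hu.1.2.le
  have hf'neg : ∀ t : ℝ, 0 ≤ t → t < ν → f' t < 0 := by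
    intro t ht htν
    rw [hν] at htν
    obtain ⟨u, huS, htu⟩ := exists_lt_of_lt_csSup hSne htν
    exact (hfmono ⟨ht, htu.trans huS.1.2⟩ huS.1 htu).trans huS.2
  have hfc1 : ContinuousOn f (Set.Ico (0 : ℝ) R) := fun x hx =>
    (hfd1 x hx).continuousWithinAt
  have hfc2 : ContinuousOn f' (Set.Ico (0 : ℝ) R) := fun x hx =>
    (hfd2 x hx).continuousWithinAt
  have hD1 : ∀ x : ℝ, 0 < x → x < R → HasDerivAt f (f' x) x := fun x h1 h2 =>
    (hfd1 x ⟨h1.le, h2⟩).hasDerivAt (Ico_mem_nhds h1 h2)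
  have hD2 : ∀ x : ℝ, 0 < x → x < R → HasDerivAt f' (f'' x) x := fun x h1 h2 =>
    (hfd2 x ⟨h1.le, h2⟩).hasDerivAt (Ico_mem_nhds h1 h2)
  have hf''mono : ∀ x ∈ Set.Ico (0 : ℝ) R, ∀ y ∈ Set.Ico (0 : ℝ) R, x ≤ y → f'' x ≤ f'' y := by
    intro x hx y hy hxy
    rcases eq_or_lt_of_le hxy with rfl | h
    · exact le_refl _
    · exact (hfconv.le_slope_of_hasDerivWithinAt hx hy h (hfd2 x hx)).trans
        (hfconv.slope_le_of_hasDerivWithinAt hx hy h (hfd2 y hy))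
  have hf''pos : ∀ t : ℝ, 0 < t → t < R → 0 < f'' t := by
    intro t ht htR
    by_contra hcon
    push_neg at hcon
    have hsub : Set.Icc (0 : ℝ) t ⊆ Set.Ico (0 : ℝ) R := fun s hs =>
      ⟨hs.1, lt_of_le_of_lt hs.2 htR⟩
    have hanti : AntitoneOn f' (Set.Icc 0 t) := by
      apply antitoneOn_of_deriv_nonpos (convex_Icc 0 t) (hfc2.mono hsub)
      · intro x hx
        rw [interior_Icc] at hx
        exact ((hD2 x hx.1 (hx.2.trans htR)).differentiableAt).differentiableWithinAt
      · intro x hx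
        rw [interior_Icc] at hx
        rw [(hD2 x hx.1 (hx.2.trans htR)).deriv]
        exact le_trans (hf''mono x ⟨hx.1.le, hx.2.trans htR⟩ t ⟨ht.le, htR⟩ hx.2.le) hcon
    have h1 : f' 0 < f' t := hfmono ⟨le_refl 0, hR⟩ ⟨ht.le, htR⟩ ht
    have h2 : f' t ≤ f' 0 := hanti ⟨le_refl 0, ht.le⟩ ⟨ht.le, le_refl t⟩ ht.le
    linarith
  have hNpos : ∀ t : ℝ, 0 < t → t < ν → f t - t * f' t < 0 := by
    intro t ht htν
    have htR : t < R := lt_of_lt_of_le htν hνR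
    have hsub : Set.Icc (0 : ℝ) t ⊆ Set.Ico (0 : ℝ) R := fun s hs =>
      ⟨hs.1, lt_of_le_of_lt hs.2 htR⟩
    have hanti : StrictAntiOn (fun s => f s - s * f' t) (Set.Icc 0 t) := by
      apply strictAntiOn_of_deriv_neg (convex_Icc 0 t)
      · exact (hfc1.mono hsub).sub (continuousOn_id.mul continuousOn_const)
      · intro x hx
        rw [interior_Icc] at hx
        have hd : HasDerivAt (fun s => f s - s * f' t) (f' x - 1 * f' t) x :=
          (hD1 x hx.1 (hx.2.trans htR)).sub ((hasDerivAt_id' x).mul_const (f' t))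
        rw [hd.deriv]
        have : f' x < f' t := hfmono ⟨hx.1.le, hx.2.trans htR⟩ ⟨ht.le, htR⟩ hx.2
        linarith
    have := hanti (Set.left_mem_Icc.mpr ht.le) (Set.right_mem_Icc.mpr ht.le) ht
    simp only [hf0, zero_mul, sub_zero] at this
    linarith
  have hfneg : ∀ t : ℝ, 0 < t → t < ν → f t < 0 := by
    intro t ht htν
    have htR : t < R := lt_of_lt_of_le htν hνR
    have hsub : Set.Icc (0 : ℝ) t ⊆ Set.Ico (0 : ℝ) R := fun s hs =>
      ⟨hs.1, lt_of_le_of_lt hs.2 htR⟩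
    have hanti : StrictAntiOn f (Set.Icc 0 t) := by
      apply strictAntiOn_of_deriv_neg (convex_Icc 0 t) (hfc1.mono hsub)
      intro x hx
      rw [interior_Icc] at hx
      rw [(hD1 x hx.1 (hx.2.trans htR)).deriv]
      exact hf'neg x hx.1.le (hx.2.trans htν)
    have := hanti (Set.left_mem_Icc.mpr ht.le) (Set.right_mem_Icc.mpr ht.le) ht
    rwa [hf0] at this
  have hNle : ∀ t : ℝ, 0 < t → t < ν → t * f' t - f t ≤ t ^ 2 * f'' t / 2 := by
    intro t ht htν
    have htR : t < R := lt_of_lt_of_le htν hνR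
    have hsub : Set.Icc (0 : ℝ) t ⊆ Set.Ico (0 : ℝ) R := fun s hs =>
      ⟨hs.1, lt_of_le_of_lt hs.2 htR⟩
    set q : ℝ → ℝ := fun s => s * f' s - f s - s ^ 2 * (f'' t / 2) with hq
    have hder : ∀ x ∈ Set.Ioo (0 : ℝ) t, HasDerivAt q (x * (f'' x - f'' t)) x := by
      intro x hx
      have hA : HasDerivAt (fun s => s * f' s) (1 * f' x + x * f'' x) x :=
        (hasDerivAt_id' x).mul (hD2 x hx.1 (hx.2.trans htR))
      have hB : HasDerivAt f (f' x) x := hD1 x hx.1 (hx.2.trans htR)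
      have hC : HasDerivAt (fun s : ℝ => s ^ 2 * (f'' t / 2)) ((2 : ℕ) * x ^ 1 * (f'' t / 2)) x :=
        (hasDerivAt_pow 2 x).mul_const (f'' t / 2)
      have := (hA.sub hB).sub hC
      refine this.congr_deriv ?_
      push_cast
      ring
    have hanti : AntitoneOn q (Set.Icc 0 t) := by
      apply antitoneOn_of_deriv_nonpos (convex_Icc 0 t)
      · exact ((continuousOn_id.mul (hfc2.mono hsub)).sub (hfc1.mono hsub)).sub
          (((continuous_pow 2).continuousOn).mul continuousOn_const)
      · intro x hx
        rw [interior_Icc] at hx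
        exact (hder x hx).differentiableAt.differentiableWithinAt
      · intro x hx
        rw [interior_Icc] at hx
        rw [(hder x hx).deriv]
        have : f'' x ≤ f'' t := hf''mono x ⟨hx.1.le, hx.2.trans htR⟩ t ⟨ht.le, htR⟩ hx.2.le
        nlinarith [hx.1.le]
    have := hanti (Set.left_mem_Icc.mpr ht.le) (Set.right_mem_Icc.mpr ht.le) ht.le
    simp only [hq, hf0] at this
    nlinarith [this]
  set g : ℝ → ℝ := fun t => (f t - t * f' t) / (f' t * t ^ 2) with hg
  have hEq : Set.EqOn (fun t : ℝ => |t - f t / f' t| / t ^ 2) g (Set.Ioo 0 ν) := by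
    intro t ht
    have hf't : f' t < 0 := hf'neg t ht.1.le ht.2
    have hf'ne : f' t ≠ 0 := ne_of_lt hf't
    have htne : t ≠ 0 := ne_of_gt ht.1
    have hN : f t - t * f' t < 0 := hNpos t ht.1 ht.2
    have h1 : t - f t / f' t = (t * f' t - f t) / f' t := by field_simp
    have h2 : (t * f' t - f t) / f' t < 0 := div_neg_of_pos_of_neg (by linarith) hf't
    show |t - f t / f' t| / t ^ 2 = (f t - t * f' t) / (f' t * t ^ 2)
    rw [h1, abs_of_neg h2]
    field_simp
    ring
  have hgd : ∀ t ∈ Set.Ioo (0 : ℝ) ν, HasDerivAt g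
      (((f' t - (1 * f' t + t * f'' t)) * (f' t * t ^ 2) -
        (f t - t * f' t) * (f'' t * t ^ 2 + f' t * ((2 : ℕ) * t ^ 1))) /
        (f' t * t ^ 2) ^ 2) t := by
    intro t ht
    have htR : t < R := ht.2.trans_le hνR
    have hA : HasDerivAt (fun s => f s - s * f' s) (f' t - (1 * f' t + t * f'' t)) t :=
      (hD1 t ht.1 htR).sub ((hasDerivAt_id' t).mul (hD2 t ht.1 htR))
    have hB : HasDerivAt (fun s => f' s * s ^ 2) (f'' t * t ^ 2 + f' t * ((2 : ℕ) * t ^ 1)) t :=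
      (hD2 t ht.1 htR).mul (hasDerivAt_pow 2 t)
    have hne : f' t * t ^ 2 ≠ 0 :=
      mul_ne_zero (ne_of_lt (hf'neg t ht.1.le ht.2)) (pow_ne_zero 2 (ne_of_gt ht.1))
    exact hA.div hB hne
  have hgd_pos : ∀ t ∈ Set.Ioo (0 : ℝ) ν, 0 < deriv g t := by
    intro t ht
    rw [(hgd t ht).deriv]
    have ht0 := ht.1
    have hf't : f' t < 0 := hf'neg t ht.1.le ht.2
    have hf''t : 0 < f'' t := hf''pos t ht.1 (ht.2.trans_le hνR)
    have hN : f t - t * f' t < 0 := hNpos t ht.1 ht.2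
    have hN2 : t * f' t - f t ≤ t ^ 2 * f'' t / 2 := hNle t ht.1 ht.2
    apply div_pos
    · have e1 : 2 * (-f' t) * (t * f' t - f t) ≤ 2 * (-f' t) * (t ^ 2 * f'' t / 2) :=
        mul_le_mul_of_nonneg_left hN2 (by linarith)
      have e2 : t * f'' t * (t * (-f' t)) < t * f'' t * (-f t) :=
        mul_lt_mul_of_pos_left (by linarith) (mul_pos ht0 hf''t)
      have e1t := mul_le_mul_of_nonneg_left e1 ht0.le
      have e2t := mul_lt_mul_of_pos_left e2 ht0
      push_cast
      nlinarith [e1t, e2t]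
    · exact pow_two_pos_of_ne_zero (mul_ne_zero (ne_of_lt hf't)
        (pow_ne_zero 2 (ne_of_gt ht0)))
  have hgmono : StrictMonoOn g (Set.Ioo 0 ν) := by
    apply strictMonoOn_of_deriv_pos (convex_Ioo 0 ν)
    · exact fun t ht => ((hgd t ht).differentiableAt.continuousAt).continuousWithinAt
    · intro t ht
      rw [interior_Ioo] at ht
      exact hgd_pos t ht
  constructor
  · exact hgmono.congr hEq.symm
  · intro t ht
    have hf't : f' t < 0 := hf'neg t ht.1.le ht.2
    have hN2 : t * f' t - f t ≤ t ^ 2 * f'' t / 2 := hNle t ht.1 ht.2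
    have h1 : |t - f t / f' t| / t ^ 2 = g t := hEq ht
    rw [h1, abs_of_neg hf't]
    have h2 : g t = (t * f' t - f t) / ((-f' t) * t ^ 2) := by
      show (f t - t * f' t) / (f' t * t ^ 2) = (t * f' t - f t) / (-f' t * t ^ 2)
      rw [show f t - t * f' t = -(t * f' t - f t) by ring,
        show f' t * t ^ 2 = -(-f' t * t ^ 2) by ring, neg_div_neg_eq]
    rw [h2, div_le_div_iff₀ (mul_pos (by linarith) (pow_pos ht.1 2)) (by linarith)]
    nlinarith [mul_le_mul_of_nonneg_left hN2 (show (0:ℝ) ≤ 2 * (-f' t) by linarith)]
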